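/- Let R be a commutative Noetherian ring, P a maximal ideal of R, and N ⊊ M finitely generated R-modules. Then N is a P-primary submodule of M if and only if Ann_R(M/N) is a P-primary ideal of R. -/

import Mathlib

/-- `N` is a `P`-primary submodule of `M`: `N` is proper, and `r • v ∈ N` implies `v ∈ N` or
`r ∈ √(Ann_R(M/N))`, where `P = √(Ann_R(M/N)) = √(N :_R M)`. -/
def Submodule.IsPrimaryIn {R M : Type*} [CommRing R] [AddCommGroup M] [Module R M]
    (P : Ideal R) (N : Submodule R M) : Prop :=
  N ≠ ⊤ ∧ (∀ (r : R) (v : M), r • v ∈ N → v ∈ N ∨ r ∈ (Submodule.colon N ⊤).radical) ∧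
    P = (Submodule.colon N ⊤).radical

/-- If `P` is a maximal ideal of `R` and `N ⊊ M` are finitely generated `R`-modules, then `N` is
a `P`-primary submodule of `M` iff `Ann_R(M/N) = (N :_R M)` is a `P`-primary ideal of `R`. -/
theorem isPrimaryIn_iff_annihilator_isPrimary {R M : Type*} [CommRing R] [IsNoetherianRing R]
    [AddCommGroup M] [Module R M] [Module.Finite R M]
    (P : Ideal R) (hP : P.IsMaximal) (N : Submodule R M) (hN : N ≠ ⊤) :
    Submodule.IsPrimaryIn P N ↔
      ((Submodule.colon N ⊤).IsPrimary ∧ (Submodule.colon N ⊤).radical = P) := by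
  constructor
  · rintro ⟨-, hprim, hrad⟩
    refine ⟨Ideal.isPrimary_iff.mpr ⟨?_, ?_⟩, hrad.symm⟩
    · intro h
      apply hN
      rw [eq_top_iff]
      intro v _
      simpa using Submodule.mem_colon.mp (h ▸ Submodule.mem_top : (1 : R) ∈ Submodule.colon N ⊤) v
        trivial
    · intro a b hab
      by_cases hb : b ∈ (Submodule.colon N ⊤).radical
      · exact Or.inr hb
      · refine Or.inl (Submodule.mem_colon.mpr fun v _ => ?_)
        have : b • a • v ∈ N := by
          rw [← mul_smul, mul_comm]
          exact Submodule.mem_colon.mp hab v trivial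
        exact (hprim b (a • v) this).resolve_right hb
  · rintro ⟨hpr, hrad⟩
    refine ⟨hN, ?_, hrad.symm⟩
    intro r v hrv
    by_cases hr : r ∈ (Submodule.colon N ⊤).radical
    · exact Or.inr hr
    · left
      set J : Ideal R := N.colon (Submodule.span R {v}) with hJ
      have hQJ : Submodule.colon N ⊤ ≤ J :=
        Submodule.colon_mono le_rfl le_top
      have hrJ : r ∈ J := Submodule.mem_colon_span_singleton.mpr hrv
      have hPrad : P ≤ J.radical := hrad ▸ Ideal.radical_mono hQJ
      have hJtop : J.radical = ⊤ := by
        refine hP.out.2 J.radical (lt_of_le_of_ne hPrad ?_)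
        intro h
        exact hr (hrad ▸ h ▸ Ideal.le_radical hrJ)
      have : J = ⊤ := Ideal.radical_eq_top.mp hJtop
      have h1 : (1 : R) ∈ J := this ▸ Submodule.mem_top
      simpa using Submodule.mem_colon_span_singleton.mp h1
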